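/- The series ∑_{d=2}^{∞} 3 · 2^d · (d-1) · (d+2) / (d+3)! converges and its sum equals 1; i.e. the probability mass function f_m(d) = 3 · 2^d (d-1)(d+2)/(d+3)! on distances d ≥ 2 sums to 1. -/
import Mathlib

open Filter

noncomputable def Fm (n : ℕ) : ℝ := 12 * (n + 2) * 2 ^ n / (Nat.factorial (n + 4))

lemma Fm_nonneg (n : ℕ) : 0 ≤ Fm n := by
  unfold Fm; positivity

lemma Fm_le (n : ℕ) : Fm n ≤ 12 * (2 ^ n / Nat.factorial n) := by
  unfold Fm
  rw [show (12:ℝ) * (2 ^ n / Nat.factorial n) = 12 * 2 ^ n / Nat.factorial n from by ring,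
    div_le_div_iff₀ (by positivity) (by positivity)]
  have h : ((n : ℝ) + 2) * Nat.factorial n ≤ Nat.factorial (n + 4) := by
    have : (n + 2) * Nat.factorial n ≤ Nat.factorial (n + 4) := by
      calc (n + 2) * Nat.factorial n ≤ (n + 2) * Nat.factorial (n + 1) := by
            exact Nat.mul_le_mul_left _ (Nat.factorial_le (by omega))
        _ = Nat.factorial (n + 2) := (Nat.factorial_succ (n + 1)).symm
        _ ≤ Nat.factorial (n + 4) := Nat.factorial_le (by omega)
    exact_mod_cast this
  nlinarith [pow_pos (show (0:ℝ) < 2 by norm_num) n]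

lemma Fm_tendsto : Tendsto Fm atTop (nhds 0) := by
  have h := (FloorSemiring.tendsto_pow_div_factorial_atTop (K := ℝ) 2).const_mul 12
  rw [mul_zero] at h
  exact squeeze_zero Fm_nonneg Fm_le h

lemma fm_eq (n : ℕ) :
    (3 * 2 ^ (n + 2) * ((n : ℝ) + 1) * ((n : ℝ) + 4)) / (Nat.factorial (n + 5))
      = Fm n - Fm (n + 1) := by
  unfold Fm
  have h5 : (Nat.factorial (n + 5) : ℝ) = (n + 5) * Nat.factorial (n + 4) := by
    exact_mod_cast Nat.factorial_succ (n + 4)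
  have h4pos : (0:ℝ) < Nat.factorial (n + 4) := by positivity
  have hn1 : ((n + 1 : ℕ) : ℝ) = (n : ℝ) + 1 := by push_cast; ring
  have hfact : (Nat.factorial (n + 1 + 4) : ℝ) = ((n : ℝ) + 5) * Nat.factorial (n + 4) := by
    have : n + 1 + 4 = n + 5 := by ring
    rw [this, h5]
  rw [hfact, hn1]
  field_simp
  ring

theorem fm_sums_to_one :
    HasSum (fun n : ℕ =>
      (3 * 2 ^ (n + 2) * ((n : ℝ) + 1) * ((n : ℝ) + 4)) / (Nat.factorial (n + 5)))
      1 := by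
  have hnn : ∀ n : ℕ, 0 ≤ (3 * 2 ^ (n + 2) * ((n : ℝ) + 1) * ((n : ℝ) + 4)) /
      (Nat.factorial (n + 5)) := by
    intro n; positivity
  rw [hasSum_iff_tendsto_nat_of_nonneg hnn]
  have hsum : ∀ N : ℕ, ∑ i ∈ Finset.range N,
      (3 * 2 ^ (i + 2) * ((i : ℝ) + 1) * ((i : ℝ) + 4)) / (Nat.factorial (i + 5))
      = Fm 0 - Fm N := by
    intro N
    rw [← Finset.sum_range_sub' Fm N]
    exact Finset.sum_congr rfl fun i _ => fm_eq i
  have hF0 : Fm 0 = 1 := by unfold Fm; norm_num [Nat.factorial]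
  simp only [hsum, hF0]
  have := Fm_tendsto.const_sub 1
  simpa using this
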